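/- Let R := Polynomial ℝ and let S := {g : Fin 2 → R | g 0 − g 1 ∈ Ideal.span {X^2}} ⊆ (Fin 2 → R). Then: (a) S equals the R-subalgebra of the product ring Fin 2 → R (with pointwise operations, R mapping in diagonally) generated by the single element g := (−X², X²); (b) the pair {(1,1), (−X², X²)} is a basis of S as an R-module; and (c) g * g = X⁴ • (1,1), so S ≅ R[g]/(g² − X⁴) as an R-algebra. -/

import Mathlib

open Polynomial

/-- The quasi-spline `g = (−X², X²)` in the product ring `Fin 2 → ℝ[X]`. -/
noncomputable def gElt : Fin 2 → Polynomial ℝ := ![-(X ^ 2), X ^ 2]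

lemma gsq : gElt * gElt = ((X : Polynomial ℝ) ^ 4) • (1 : Fin 2 → Polynomial ℝ) := by
  funext i
  fin_cases i <;> simp [gElt] <;> ring

lemma indep {a b : Polynomial ℝ} (h : a • (1 : Fin 2 → Polynomial ℝ) + b • gElt = 0) :
    a = 0 ∧ b = 0 := by
  have h0 := congrFun h 0
  have h1 := congrFun h 1
  simp [gElt] at h0 h1
  have hb : (2 : Polynomial ℝ) * (b * X ^ 2) = 0 := by linear_combination h1 - h0
  have hb' : b * (X:Polynomial ℝ) ^ 2 = 0 := by
    rcases mul_eq_zero.mp hb with h | h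
    · exact absurd h two_ne_zero
    · exact h
  have hbz : b = 0 := by
    rcases mul_eq_zero.mp hb' with h | h
    · exact h
    · exact absurd h (pow_ne_zero 2 X_ne_zero)
  subst hbz
  constructor
  · linear_combination h0
  · rfl

lemma rep {v : Fin 2 → Polynomial ℝ}
    (h : v 0 - v 1 ∈ Ideal.span {(X : Polynomial ℝ) ^ 2}) :
    ∃ a b : Polynomial ℝ, a • (1 : Fin 2 → Polynomial ℝ) + b • gElt = v := by
  obtain ⟨q, hq⟩ := Ideal.mem_span_singleton.mp h
  refine ⟨C (2⁻¹ : ℝ) * (v 0 + v 1), -(C (2⁻¹ : ℝ) * q), ?_⟩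
  have h2 : (C (2⁻¹ : ℝ) : Polynomial ℝ) * 2 = 1 := by
    rw [show (2 : Polynomial ℝ) = C 2 from rfl, ← C_mul]
    norm_num
  funext i
  fin_cases i
  · simp [gElt]
    linear_combination (-(C (2⁻¹ : ℝ))) * hq + v 0 * h2
  · simp [gElt]
    linear_combination (C (2⁻¹ : ℝ)) * hq + v 1 * h2

/-- The quasi-spline set as a subalgebra. -/
noncomputable def Tsub : Subalgebra (Polynomial ℝ) (Fin 2 → Polynomial ℝ) where
  carrier := {v | v 0 - v 1 ∈ Ideal.span {(X : Polynomial ℝ) ^ 2}}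
  mul_mem' := by
    intro v w hv hw
    simp only [Set.mem_setOf_eq, Pi.mul_apply] at *
    have h : v 0 * w 0 - v 1 * w 1 = v 0 * (w 0 - w 1) + (v 0 - v 1) * w 1 := by ring
    rw [h]
    exact add_mem (Ideal.mul_mem_left _ _ hw) (Ideal.mul_mem_right _ _ hv)
  one_mem' := by simp
  add_mem' := by
    intro v w hv hw
    simp only [Set.mem_setOf_eq, Pi.add_apply] at *
    have h : v 0 + w 0 - (v 1 + w 1) = (v 0 - v 1) + (w 0 - w 1) := by ring
    rw [h]
    exact add_mem hv hw
  zero_mem' := by simp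
  algebraMap_mem' := by intro r; simp

lemma gElt_mem_Tsub : gElt ∈ Tsub := by
  have h : gElt 0 - gElt 1 ∈ Ideal.span {(X : Polynomial ℝ) ^ 2} := by
    simp only [gElt]
    exact Ideal.mem_span_singleton.mpr ⟨-2, by simp; ring⟩
  exact h

lemma adjoin_le_Tsub : Algebra.adjoin (Polynomial ℝ) {gElt} ≤ Tsub :=
  Algebra.adjoin_le (Set.singleton_subset_iff.mpr gElt_mem_Tsub)

lemma one_mem_adjoin : (1 : Fin 2 → Polynomial ℝ) ∈ Algebra.adjoin (Polynomial ℝ) {gElt} :=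
  (Algebra.adjoin (Polynomial ℝ) {gElt}).one_mem

lemma gElt_mem_adjoin : gElt ∈ Algebra.adjoin (Polynomial ℝ) {gElt} :=
  Algebra.self_mem_adjoin_singleton _ _

lemma aeval_m : aeval gElt ((X : Polynomial (Polynomial ℝ)) ^ 2 - C ((X : Polynomial ℝ) ^ 4)) = 0 := by
  have : aeval gElt ((X : Polynomial (Polynomial ℝ)) ^ 2 - C ((X : Polynomial ℝ) ^ 4))
      = gElt * gElt - ((X : Polynomial ℝ) ^ 4) • (1 : Fin 2 → Polynomial ℝ) := by
    simp [Algebra.smul_def, sq]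
  rw [this, gsq, sub_self]

lemma ker_eq :
    RingHom.ker (aeval gElt : Polynomial (Polynomial ℝ) →ₐ[Polynomial ℝ] (Fin 2 → Polynomial ℝ))
      = Ideal.span {(X : Polynomial (Polynomial ℝ)) ^ 2 - C ((X : Polynomial ℝ) ^ 4)} := by
  set m : Polynomial (Polynomial ℝ) := (X : Polynomial (Polynomial ℝ)) ^ 2 - C ((X : Polynomial ℝ) ^ 4) with hm
  have hmonic : m.Monic := monic_X_pow_sub_C _ (by norm_num)
  apply le_antisymm
  · intro p hp
    have hp0 : aeval gElt p = 0 := hp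
    have hdiv := modByMonic_add_div p m
    have ham : aeval gElt m = 0 := by rw [hm]; exact aeval_m
    have hr0 : aeval gElt (p %ₘ m) = 0 := by
      have := congrArg (aeval gElt) hdiv
      simp only [map_add, map_mul, ham, zero_mul, add_zero] at this
      rw [this, hp0]
    have hdeg : (p %ₘ m).degree < m.degree := degree_modByMonic_lt p hmonic
    have hdeg2 : (p %ₘ m).degree < 2 := by
      rwa [hm, degree_X_pow_sub_C (by norm_num)] at hdeg
    have hle : (p %ₘ m).degree ≤ 1 := by
      exact Order.le_of_lt_succ hdeg2
    have heq := eq_X_add_C_of_degree_le_one hle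
    have h0 : (p %ₘ m).coeff 0 • (1 : Fin 2 → Polynomial ℝ) + (p %ₘ m).coeff 1 • gElt = 0 := by
      have := hr0
      rw [heq] at this
      simp only [map_add, map_mul, aeval_X, aeval_C] at this
      rw [Algebra.smul_def, Algebra.smul_def, mul_one]
      linear_combination this
    obtain ⟨ha, hb⟩ := indep h0
    have hrz : p %ₘ m = 0 := by rw [heq, ha, hb]; simp
    rw [Ideal.mem_span_singleton]
    exact (modByMonic_eq_zero_iff_dvd hmonic).mp hrz
  · rw [Ideal.span_le, Set.singleton_subset_iff]
    exact aeval_m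

/-- For `R = ℝ[X]` and `S = {g : Fin 2 → R | g 0 − g 1 ∈ (X²)}`:
(a) `S` is the `R`-subalgebra of `Fin 2 → R` generated by `g = (−X², X²)`;
(b) `{(1,1), (−X², X²)}` is an `R`-module basis of `S`;
(c) `g * g = X⁴ • (1,1)`, and `S ≅ R[g]/(g² − X⁴)` as `R`-algebras. -/
theorem stmt_5 (S : Submodule (Polynomial ℝ) (Fin 2 → Polynomial ℝ))
    (hS : ∀ v : Fin 2 → Polynomial ℝ,
      v ∈ S ↔ v 0 - v 1 ∈ Ideal.span {(X : Polynomial ℝ) ^ 2}) :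
    (Subalgebra.toSubmodule (Algebra.adjoin (Polynomial ℝ) {gElt}) = S) ∧
    (∃ b : Module.Basis (Fin 2) (Polynomial ℝ) S,
      ((b 0 : Fin 2 → Polynomial ℝ) = 1 ∧ (b 1 : Fin 2 → Polynomial ℝ) = gElt)) ∧
    (gElt * gElt = ((X : Polynomial ℝ) ^ 4) • (1 : Fin 2 → Polynomial ℝ)) ∧
    Nonempty
      ((Polynomial (Polynomial ℝ) ⧸
          Ideal.span {(X : Polynomial (Polynomial ℝ)) ^ 2 - C ((X : Polynomial ℝ) ^ 4)})
        ≃ₐ[Polynomial ℝ] Algebra.adjoin (Polynomial ℝ) {gElt}) := by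
  refine ⟨?_, ?_, gsq, ?_⟩
  · -- (a)
    ext v
    constructor
    · intro hv
      exact (hS v).mpr (adjoin_le_Tsub hv)
    · intro hv
      obtain ⟨a, b, hab⟩ := rep ((hS v).mp hv)
      rw [← hab]
      exact add_mem (Submodule.smul_mem _ _ one_mem_adjoin) (Submodule.smul_mem _ _ gElt_mem_adjoin)
  · -- (b)
    have h1S : (1 : Fin 2 → Polynomial ℝ) ∈ S := (hS 1).mpr (by simp)
    have hgS : gElt ∈ S := (hS gElt).mpr gElt_mem_Tsub
    set vs : Fin 2 → S := ![⟨1, h1S⟩, ⟨gElt, hgS⟩] with hvs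
    have hli : LinearIndependent (Polynomial ℝ) vs := by
      rw [Fintype.linearIndependent_iff]
      intro c hc
      have : c 0 • (1 : Fin 2 → Polynomial ℝ) + c 1 • gElt = 0 := by
        have := congrArg Subtype.val hc
        simpa [hvs, Fin.sum_univ_two] using this
      obtain ⟨h0, h1⟩ := indep this
      intro i; fin_cases i <;> assumption
    have hspan : ⊤ ≤ Submodule.span (Polynomial ℝ) (Set.range vs) := by
      rintro ⟨v, hv⟩ -
      obtain ⟨a, b, hab⟩ := rep ((hS v).mp hv)
      have hrange : Set.range vs = {vs 0, vs 1} := by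
        ext x
        simp only [hvs, Set.mem_range, Fin.exists_fin_two, Set.mem_insert_iff, Set.mem_singleton_iff]
        tauto
      rw [hrange]
      exact Submodule.mem_span_pair.mpr ⟨a, b, Subtype.ext (by simpa [hvs] using hab)⟩
    refine ⟨Module.Basis.mk hli hspan, ?_, ?_⟩ <;> simp [Module.Basis.mk_apply, hvs]
  · -- (c)/(d)
    set A := Algebra.adjoin (Polynomial ℝ) {gElt} with hA
    have hrange : A = (aeval gElt : Polynomial (Polynomial ℝ) →ₐ[Polynomial ℝ] _).range :=
      Algebra.adjoin_singleton_eq_range_aeval _ _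
    have hmem : ∀ p, aeval gElt p ∈ A := fun p => by rw [hrange]; exact ⟨p, rfl⟩
    set f : Polynomial (Polynomial ℝ) →ₐ[Polynomial ℝ] A := (aeval gElt).codRestrict A hmem with hf
    have hsurj : Function.Surjective f := by
      rintro ⟨y, hy⟩
      rw [hrange] at hy
      obtain ⟨p, hp⟩ := hy
      exact ⟨p, Subtype.ext hp⟩
    have hkerf : RingHom.ker f = Ideal.span {(X : Polynomial (Polynomial ℝ)) ^ 2 - C ((X : Polynomial ℝ) ^ 4)} := by
      rw [← ker_eq]
      ext p
      simp only [RingHom.mem_ker]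
      exact ⟨fun h => congrArg Subtype.val h, fun h => Subtype.ext h⟩
    exact ⟨(Ideal.quotientEquivAlgOfEq _ hkerf.symm).trans (Ideal.quotientKerAlgEquivOfSurjective hsurj)⟩
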